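/- Let m, n ≥ k ≥ 1 and let A be an m×n real matrix. Suppose that for every r ∈ [k] and every contiguous r×r submatrix A_r of A, the vector x^{A_r} := (A_r¹¹, −A_r¹², ..., (−1)^{r−1} A_r^{1r})ᵀ satisfies the sign non-reversal property: there exists i with x^{A_r}_i (A_r x^{A_r})_i > 0. Then A is totally positive of order k (all minors of size at most k are positive). -/

import Mathlib

open Matrix

/-- `A` is totally positive of order `k`: all minors of size at most `k` are positive. -/
def TotallyPositiveOfOrder {m n : ℕ} (A : Matrix (Fin m) (Fin n) ℝ) (k : ℕ) : Prop :=
  ∀ r : ℕ, r ≤ k → ∀ (f : Fin r → Fin m) (g : Fin r → Fin n),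
    StrictMono f → StrictMono g → 0 < (A.submatrix f g).det

/-- The contiguous `(s+1)×(s+1)` submatrix of `A` with rows `a,…,a+s` and columns `b,…,b+s`. -/
def contSub {m n : ℕ} (A : Matrix (Fin m) (Fin n) ℝ) (a b s : ℕ)
    (ha : a + (s + 1) ≤ m) (hb : b + (s + 1) ≤ n) :
    Matrix (Fin (s + 1)) (Fin (s + 1)) ℝ :=
  fun i j => A ⟨a + i, by have := i.isLt; omega⟩ ⟨b + j, by have := j.isLt; omega⟩

/-- The vector `(B¹¹, -B¹², …, (-1)^s B^{1,s+1})` of signed first-row minors of `B`. -/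
noncomputable def signAltMinorVec {s : ℕ} (B : Matrix (Fin (s + 1)) (Fin (s + 1)) ℝ) :
    Fin (s + 1) → ℝ :=
  fun j => (-1 : ℝ) ^ (j : ℕ) * (B.submatrix Fin.succ j.succAbove).det

/-- Cofactor syzygy: the signed maximal minors of a `(q+1) × q` matrix annihilate its columns. -/
lemma syzygyAux (q : ℕ) (W : Matrix (Fin (q + 1)) (Fin q) ℝ) (j : Fin q) :
    ∑ i : Fin (q + 1), (-1 : ℝ) ^ (i : ℕ) * (W.submatrix i.succAbove id).det * W i j = 0 := by
  classical
  set Q : Matrix (Fin (q + 1)) (Fin (q + 1)) ℝ := fun p => Fin.snoc (W p) (W p j) with hQ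
  have hdup : Q.det = 0 := by
    apply Matrix.det_zero_of_column_eq (i := Fin.castSucc j) (j := Fin.last q)
    · exact (Fin.castSucc_lt_last j).ne
    · intro p; simp [hQ]
  have hexp := Matrix.det_succ_column Q (Fin.last q)
  have hsub : ∀ i : Fin (q + 1),
      Q.submatrix i.succAbove (Fin.last q).succAbove = W.submatrix i.succAbove id := by
    intro i
    ext p l
    simp [hQ, Fin.succAbove_last]
    exact Fin.snoc_castSucc (α := fun _ => ℝ) _ _ _
  have hcol : ∀ i : Fin (q + 1), Q i (Fin.last q) = W i j := by
    intro i; simp [hQ]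
  rw [hdup] at hexp
  have h2 : ∀ i : Fin (q + 1),
      (-1 : ℝ) ^ (i : ℕ) * (W.submatrix i.succAbove id).det * W i j
        = (-1 : ℝ) ^ (q : ℕ) * ((-1 : ℝ) ^ ((i : ℕ) + (Fin.last q : ℕ)) * Q i (Fin.last q) *
            (Q.submatrix i.succAbove (Fin.last q).succAbove).det) := by
    intro i
    rw [hsub, hcol]
    have h3 : (-1 : ℝ) ^ (q * 2) = 1 := Even.neg_one_pow ⟨q, by ring⟩
    simp only [Fin.val_last, pow_add]
    linear_combination (-((-1 : ℝ) ^ (i : ℕ) * (W.submatrix i.succAbove id).det * W i j)) * h3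
  calc ∑ i : Fin (q + 1), (-1 : ℝ) ^ (i : ℕ) * (W.submatrix i.succAbove id).det * W i j
      = ∑ i : Fin (q + 1), (-1 : ℝ) ^ (q : ℕ) * ((-1 : ℝ) ^ ((i : ℕ) + (Fin.last q : ℕ)) *
          Q i (Fin.last q) * (Q.submatrix i.succAbove (Fin.last q).succAbove).det) := by
        exact Finset.sum_congr rfl fun i _ => h2 i
    _ = (-1 : ℝ) ^ (q : ℕ) * ∑ i : Fin (q + 1), (-1 : ℝ) ^ ((i : ℕ) + (Fin.last q : ℕ)) *
          Q i (Fin.last q) * (Q.submatrix i.succAbove (Fin.last q).succAbove).det := by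
        rw [Finset.mul_sum]
    _ = 0 := by rw [← hexp]; ring

/-- Key lemma: for an `(s+2) × (s+1)` matrix all of whose "drop-two-rows-and-last-column"
minors are positive, if the maximal minors dropping the first resp. last row are positive,
then all maximal minors are positive. -/
lemma claimAux (s : ℕ) (N : Matrix (Fin (s + 2)) (Fin (s + 1)) ℝ)
    (hF : ∀ d : Fin s → Fin (s + 2), StrictMono d → 0 < (N.submatrix d Fin.castSucc).det)
    (hE0 : 0 < (N.submatrix (Fin.succAbove 0) id).det)
    (hEL : 0 < (N.submatrix (Fin.succAbove (Fin.last (s + 1))) id).det) :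
    ∀ t : Fin (s + 2), 0 < (N.submatrix t.succAbove id).det := by
  classical
  set E : Fin (s + 2) → ℝ := fun i => (N.submatrix i.succAbove id).det with hE_def
  set F0 : Fin (s + 1) → ℝ :=
    fun l => (N.submatrix (Fin.succ ∘ l.succAbove) Fin.castSucc).det with hF0_def
  set FL : Fin (s + 1) → ℝ :=
    fun l => (N.submatrix (Fin.castSucc ∘ l.succAbove) Fin.castSucc).det with hFL_def
  have hF0pos : ∀ l, 0 < F0 l :=
    fun l => hF _ (Fin.strictMono_succ.comp (Fin.strictMono_succAbove l))
  have hFLpos : ∀ l, 0 < FL l :=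
    fun l => hF _ (Fin.strictMono_castSucc.comp (Fin.strictMono_succAbove l))
  set F0L : ℝ := (N.submatrix (Fin.succ ∘ Fin.castSucc) Fin.castSucc).det with hF0L_def
  have hF0Lpos : 0 < F0L := hF _ (Fin.strictMono_succ.comp Fin.strictMono_castSucc)
  set y0 : Fin (s + 2) → ℝ :=
    fun i => Fin.cases 0 (fun i' => (-1 : ℝ) ^ (i' : ℕ) * F0 i') i with hy0_def
  set yL : Fin (s + 2) → ℝ :=
    fun i => Fin.lastCases 0 (fun i'' => (-1 : ℝ) ^ (i'' : ℕ) * FL i'') i with hyL_def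
  set w : Fin (s + 2) → ℝ := fun i =>
    F0L * ((-1 : ℝ) ^ (i : ℕ) * E i) + E (Fin.last (s + 1)) * y0 i - E 0 * yL i with hw_def
  -- helper evaluation rules
  have hy0zero : y0 0 = 0 := rfl
  have hy0succ : ∀ i' : Fin (s + 1), y0 (Fin.succ i') = (-1 : ℝ) ^ (i' : ℕ) * F0 i' := by
    intro i'; rw [hy0_def]; simp
  have hyLlast : yL (Fin.last (s + 1)) = 0 := by rw [hyL_def]; simp
  have hyLcast : ∀ i'' : Fin (s + 1), yL (Fin.castSucc i'') = (-1 : ℝ) ^ (i'' : ℕ) * FL i'' := by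
    intro i''; rw [hyL_def]; simp
  have hfun0 : (Fin.castSucc ∘ (0 : Fin (s + 1)).succAbove)
      = (Fin.succ ∘ Fin.castSucc : Fin s → Fin (s + 2)) := by
    funext x; simp [Fin.ext_iff]
  have hfunL : (Fin.succ ∘ (Fin.last s).succAbove)
      = (Fin.succ ∘ Fin.castSucc : Fin s → Fin (s + 2)) := by
    funext x; simp [Fin.succAbove_last]
  have hFL0 : FL 0 = F0L := by
    show (N.submatrix (Fin.castSucc ∘ (0 : Fin (s + 1)).succAbove) Fin.castSucc).det = F0L
    rw [hfun0]
  have hF0l : F0 (Fin.last s) = F0L := by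
    show (N.submatrix (Fin.succ ∘ (Fin.last s).succAbove) Fin.castSucc).det = F0L
    rw [hfunL]
  -- orthogonality relations
  have O1 : ∀ j : Fin (s + 1), ∑ i : Fin (s + 2), ((-1 : ℝ) ^ (i : ℕ) * E i) * N i j = 0 := by
    intro j
    have := syzygyAux (s + 1) N j
    simpa [hE_def] using this
  have O2 : ∀ j : Fin s, ∑ i : Fin (s + 2), y0 i * N i (Fin.castSucc j) = 0 := by
    intro j
    have h := syzygyAux s (N.submatrix Fin.succ Fin.castSucc) j
    rw [Fin.sum_univ_succ, hy0zero, zero_mul, zero_add]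
    rw [← h]
    apply Finset.sum_congr rfl
    intro i' _
    rw [hy0succ i', Matrix.submatrix_submatrix, Matrix.submatrix_apply]
    rfl
  have O3 : ∀ j : Fin s, ∑ i : Fin (s + 2), yL i * N i (Fin.castSucc j) = 0 := by
    intro j
    have h := syzygyAux s (N.submatrix Fin.castSucc Fin.castSucc) j
    rw [Fin.sum_univ_castSucc, hyLlast, zero_mul, add_zero]
    rw [← h]
    apply Finset.sum_congr rfl
    intro i'' _
    rw [hyLcast i'', Matrix.submatrix_submatrix, Matrix.submatrix_apply]
    rfl
  have hw : ∀ j : Fin s, ∑ i : Fin (s + 2), w i * N i (Fin.castSucc j) = 0 := by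
    intro j
    have expand : ∑ i : Fin (s + 2), w i * N i (Fin.castSucc j)
        = F0L * (∑ i : Fin (s + 2), ((-1 : ℝ) ^ (i : ℕ) * E i) * N i (Fin.castSucc j))
          + E (Fin.last (s + 1)) * (∑ i : Fin (s + 2), y0 i * N i (Fin.castSucc j))
          - E 0 * (∑ i : Fin (s + 2), yL i * N i (Fin.castSucc j)) := by
      rw [Finset.mul_sum, Finset.mul_sum, Finset.mul_sum, ← Finset.sum_add_distrib,
        ← Finset.sum_sub_distrib]
      apply Finset.sum_congr rfl
      intro i _
      show (F0L * ((-1 : ℝ) ^ (i : ℕ) * E i) + E (Fin.last (s + 1)) * y0 i - E 0 * yL i)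
          * N i (Fin.castSucc j) = _
      ring
    rw [expand, O1, O2, O3]; ring
  -- boundary values of w vanish
  have w0 : w 0 = 0 := by
    show F0L * ((-1 : ℝ) ^ ((0 : Fin (s + 2)) : ℕ) * E 0)
        + E (Fin.last (s + 1)) * y0 0 - E 0 * yL 0 = 0
    have h1 : yL 0 = F0L := by
      have := hyLcast 0
      simpa [hFL0] using this
    rw [h1, hy0zero]
    simp only [Fin.val_zero, pow_zero, mul_zero, add_zero, one_mul]
    ring
  have wlast : w (Fin.last (s + 1)) = 0 := by
    show F0L * ((-1 : ℝ) ^ ((Fin.last (s + 1) : Fin (s + 2)) : ℕ) * E (Fin.last (s + 1)))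
        + E (Fin.last (s + 1)) * y0 (Fin.last (s + 1)) - E 0 * yL (Fin.last (s + 1)) = 0
    have h1 : y0 (Fin.last (s + 1)) = (-1 : ℝ) ^ s * F0L := by
      rw [← Fin.succ_last, hy0succ, hF0l, Fin.val_last]
    rw [h1, hyLlast, Fin.val_last, pow_succ]
    ring
  -- the interior part of w is in the left kernel of an invertible matrix
  set u : Fin s → ℝ := fun l => w (Fin.succ (Fin.castSucc l)) with hu_def
  have hu : u ᵥ* (N.submatrix (Fin.succ ∘ Fin.castSucc) Fin.castSucc) = 0 := by
    funext j
    have h := hw j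
    rw [Fin.sum_univ_succ, Fin.sum_univ_castSucc, w0, Fin.succ_last, wlast] at h
    simp only [zero_mul, zero_add, add_zero] at h
    simpa [Matrix.vecMul, dotProduct, hu_def] using h
  have huz : u = 0 := Matrix.eq_zero_of_vecMul_eq_zero (ne_of_gt hF0Lpos) hu
  -- conclude
  intro t
  by_cases ht0 : t = 0
  · subst ht0; exact hE0
  by_cases htL : t = Fin.last (s + 1)
  · subst htL; exact hEL
  have htv0 : (t : ℕ) ≠ 0 := fun hc => ht0 (Fin.ext hc)
  have htvL : (t : ℕ) ≠ s + 1 := fun hc => htL (Fin.ext hc)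
  have ht' : (t : ℕ) - 1 < s := by have := t.isLt; omega
  set t' : ℕ := (t : ℕ) - 1 with ht'_def
  have htval : (t : ℕ) = t' + 1 := by omega
  have hwt : F0L * ((-1 : ℝ) ^ (t : ℕ) * E t)
      + E (Fin.last (s + 1)) * y0 t - E 0 * yL t = 0 := by
    have h0 := congrFun huz ⟨t', ht'⟩
    have harg : Fin.succ (Fin.castSucc (⟨t', ht'⟩ : Fin s)) = t := by
      rw [Fin.ext_iff]; simp; omega
    rw [hu_def] at h0
    simp only at h0
    rw [harg] at h0
    exact h0
  have hy0t : y0 t = (-1 : ℝ) ^ t' * F0 (Fin.castSucc ⟨t', ht'⟩) := by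
    have harg : t = Fin.succ (Fin.castSucc (⟨t', ht'⟩ : Fin s)) := by
      rw [Fin.ext_iff]; simp; omega
    rw [harg, hy0succ]
    simp
  have hyLt : yL t = (-1 : ℝ) ^ (t' + 1) * FL (Fin.succ ⟨t', ht'⟩) := by
    have harg : t = Fin.castSucc (Fin.succ (⟨t', ht'⟩ : Fin s)) := by
      rw [Fin.ext_iff]; simp; omega
    rw [harg, hyLcast]
    simp
  rw [hy0t, hyLt, htval] at hwt
  have hid : F0L * E t = E (Fin.last (s + 1)) * F0 (Fin.castSucc ⟨t', ht'⟩)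
      + E 0 * FL (Fin.succ ⟨t', ht'⟩) := by
    rcases Nat.even_or_odd t' with he | ho
    · rw [pow_succ, he.neg_one_pow] at hwt
      linarith
    · rw [pow_succ, ho.neg_one_pow] at hwt
      linarith
  have hpos : 0 < F0L * E t := by
    rw [hid]
    exact add_pos (mul_pos hEL (hF0pos _)) (mul_pos hE0 (hFLpos _))
  have hEt : 0 < E t := by
    by_contra hc
    push_neg at hc
    nlinarith
  exact hEt

lemma strictMono_val_add_le {r M : ℕ} (f : Fin r → Fin M) (hf : StrictMono f) :
    ∀ (d : ℕ) (a b : Fin r), (a : ℕ) + d = (b : ℕ) → (f a : ℕ) + d ≤ (f b : ℕ) := by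
  intro d
  induction d with
  | zero =>
    intro a b hab
    have : a = b := Fin.ext (by omega)
    subst this; omega
  | succ d ih =>
    intro a b hab
    have hb : (b : ℕ) - 1 < r := by have := b.isLt; omega
    have h1 := ih a ⟨(b : ℕ) - 1, hb⟩ (by simp; omega)
    have h2 : f ⟨(b : ℕ) - 1, hb⟩ < f b := hf (by rw [Fin.lt_def]; simp; omega)
    rw [Fin.lt_def] at h2
    simp at h1 h2
    omega

lemma exists_gap {s M : ℕ} (f : Fin (s + 1) → Fin M) (hf : StrictMono f)
    (hsp : (f 0 : ℕ) + s < (f (Fin.last s) : ℕ)) :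
    ∃ t : Fin s, (f t.castSucc : ℕ) + 1 < (f t.succ : ℕ) := by
  by_contra hc
  push_neg at hc
  have key : ∀ j : Fin (s + 1), (f j : ℕ) ≤ (f 0 : ℕ) + (j : ℕ) := by
    intro j
    induction j using Fin.induction with
    | zero => omega
    | succ t ihj =>
      have h1 := hc t
      have h2 : ((t.castSucc : Fin (s + 1)) : ℕ) = (t : ℕ) := rfl
      have h3 : ((t.succ : Fin (s + 1)) : ℕ) = (t : ℕ) + 1 := rfl
      omega
  have := key (Fin.last s)
  have h4 : ((Fin.last s : Fin (s + 1)) : ℕ) = s := rfl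
  omega

lemma insert_map {s M : ℕ} (f : Fin (s + 1) → Fin M) (hf : StrictMono f) (t : Fin s)
    (hgap : (f t.castSucc : ℕ) + 1 < (f t.succ : ℕ)) :
    ∃ g : Fin (s + 2) → Fin M, StrictMono g ∧
      g ∘ (Fin.succAbove ⟨(t : ℕ) + 1, by have := t.isLt; omega⟩) = f ∧
      g 0 = f 0 ∧ g (Fin.last (s + 1)) = f (Fin.last s) := by
  have hm : (f t.castSucc : ℕ) + 1 < M := lt_trans hgap (f t.succ).isLt
  set g : Fin (s + 2) → Fin M := fun j =>
    if hj : (j : ℕ) ≤ (t : ℕ) then f ⟨(j : ℕ), by have := t.isLt; omega⟩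
    else if hj' : (j : ℕ) = (t : ℕ) + 1 then ⟨(f t.castSucc : ℕ) + 1, hm⟩
    else f ⟨(j : ℕ) - 1, by have := j.isLt; omega⟩ with hg_def
  have gA : ∀ (j : Fin (s + 2)) (hj : (j : ℕ) ≤ (t : ℕ)),
      g j = f ⟨(j : ℕ), by have := t.isLt; omega⟩ := by
    intro j hj; rw [hg_def]; simp only [dif_pos hj]
  have gB : ∀ (j : Fin (s + 2)) (hj : (j : ℕ) = (t : ℕ) + 1),
      g j = ⟨(f t.castSucc : ℕ) + 1, hm⟩ := by
    intro j hj; rw [hg_def]; simp only [dif_neg (by omega : ¬(j : ℕ) ≤ (t : ℕ)), dif_pos hj]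
  have gC : ∀ (j : Fin (s + 2)) (hj : (t : ℕ) + 1 < (j : ℕ)),
      g j = f ⟨(j : ℕ) - 1, by have := j.isLt; omega⟩ := by
    intro j hj
    rw [hg_def]
    simp only [dif_neg (by omega : ¬(j : ℕ) ≤ (t : ℕ)),
      dif_neg (by omega : ¬(j : ℕ) = (t : ℕ) + 1)]
  have hmono : StrictMono g := by
    rw [Fin.strictMono_iff_lt_succ]
    intro i
    have hcv : ((i.castSucc : Fin (s + 2)) : ℕ) = (i : ℕ) := rfl
    have hsv : ((i.succ : Fin (s + 2)) : ℕ) = (i : ℕ) + 1 := rfl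
    rcases lt_trichotomy ((i : ℕ) + 1) ((t : ℕ) + 1) with hlt | heq | hgt
    · rw [gA i.castSucc (by omega), gA i.succ (by omega)]
      exact hf (by simp only [Fin.mk_lt_mk]; omega)
    · have h1 : g i.castSucc = f t.castSucc := by
        rw [gA i.castSucc (by omega)]
        exact congrArg f (Fin.ext (by simp only [Fin.coe_castSucc]; omega))
      have h2 : g i.succ = ⟨(f t.castSucc : ℕ) + 1, hm⟩ := gB i.succ (by omega)
      rw [h1, h2, Fin.lt_def]
      simp
    · rcases Nat.eq_or_lt_of_le hgt with heq2 | hgt2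
      · have h1 : g i.castSucc = ⟨(f t.castSucc : ℕ) + 1, hm⟩ := gB i.castSucc (by omega)
        have h2 : g i.succ = f t.succ := by
          rw [gC i.succ (by omega)]
          exact congrArg f (Fin.ext (by simp only [Fin.val_succ]; omega))
        rw [h1, h2, Fin.lt_def]
        exact hgap
      · rw [gC i.castSucc (by omega), gC i.succ (by omega)]
        exact hf (by simp only [Fin.mk_lt_mk]; omega)
  refine ⟨g, hmono, ?_, ?_, ?_⟩
  · funext i
    show g (Fin.succAbove _ i) = f i
    by_cases hi : (i : ℕ) ≤ (t : ℕ)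
    · have harg : Fin.succAbove ⟨(t : ℕ) + 1, by have := t.isLt; omega⟩ i = i.castSucc :=
        Fin.succAbove_of_castSucc_lt _ _
          (by simp only [Fin.lt_def, Fin.coe_castSucc]; omega)
      rw [harg, gA i.castSucc (by simp only [Fin.coe_castSucc]; omega)]
      exact congrArg f (Fin.ext rfl)
    · have harg : Fin.succAbove ⟨(t : ℕ) + 1, by have := t.isLt; omega⟩ i = i.succ :=
        Fin.succAbove_of_le_castSucc _ _
          (by simp only [Fin.le_def, Fin.coe_castSucc]; omega)
      rw [harg, gC i.succ (by simp only [Fin.val_succ]; omega)]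
      exact congrArg f (Fin.ext (by simp only [Fin.val_succ]; omega))
  · rw [gA 0 (by simp only [Fin.val_zero]; omega)]
    exact congrArg f (Fin.ext rfl)
  · rw [gC (Fin.last (s + 1)) (by simp only [Fin.val_last]; omega)]
    exact congrArg f (Fin.ext (by simp only [Fin.val_last]; omega))

lemma mulVec_signAltMinorVec (s : ℕ) (B : Matrix (Fin (s + 1)) (Fin (s + 1)) ℝ)
    (i : Fin (s + 1)) :
    B.mulVec (signAltMinorVec B) i = if i = 0 then B.det else 0 := by
  classical
  have key : B.mulVec (signAltMinorVec B) i = (B.updateRow 0 (B i)).det := by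
    rw [Matrix.det_succ_row_zero]
    simp only [Matrix.mulVec, dotProduct, signAltMinorVec]
    apply Finset.sum_congr rfl
    intro j _
    have h1 : (B.updateRow 0 (B i)) 0 j = B i j := by rw [Matrix.updateRow_self]
    have h2 : (B.updateRow 0 (B i)).submatrix Fin.succ j.succAbove
        = B.submatrix Fin.succ j.succAbove := by
      ext p q
      rw [Matrix.submatrix_apply, Matrix.submatrix_apply,
        Matrix.updateRow_ne (Fin.succ_ne_zero p)]
    rw [h1, h2]; ring
  rcases eq_or_ne i 0 with rfl | hne
  · rw [key, Matrix.updateRow_eq_self, if_pos rfl]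
  · rw [key, if_neg hne]
    apply Matrix.det_zero_of_row_eq (Ne.symm hne)
    rw [Matrix.updateRow_self, Matrix.updateRow_ne hne]

/-- Stage 1: minors with arbitrary rows and consecutive columns are positive. -/
lemma stage1 {m n : ℕ} (A : Matrix (Fin m) (Fin n) ℝ) (s : ℕ)
    (hcontig : ∀ (a b : ℕ) (ha : a + (s + 1) ≤ m) (hb : b + (s + 1) ≤ n),
      0 < (contSub A a b s ha hb).det)
    (hsmall : ∀ (f' : Fin s → Fin m) (g' : Fin s → Fin n), StrictMono f' → StrictMono g' →
      0 < (A.submatrix f' g').det) :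
    ∀ (L : ℕ) (f : Fin (s + 1) → Fin m), StrictMono f →
      (f (Fin.last s) : ℕ) - (f 0 : ℕ) ≤ L →
      ∀ (b : ℕ) (hb : b + (s + 1) ≤ n),
        0 < (A.submatrix f (fun j : Fin (s + 1) => (⟨b + (j : ℕ), by have := j.isLt; omega⟩ : Fin n))).det := by
  intro L
  induction L using Nat.strong_induction_on with
  | _ L ihL =>
    intro f hf hspan b hb
    by_cases hcase : (f (Fin.last s) : ℕ) ≤ (f 0 : ℕ) + s
    · -- contiguous rows
      have hj : ∀ j : Fin (s + 1), (f j : ℕ) = (f 0 : ℕ) + (j : ℕ) := by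
        intro j
        have h1 := strictMono_val_add_le f hf (j : ℕ) 0 j (by simp)
        have h2 := strictMono_val_add_le f hf (s - (j : ℕ)) j (Fin.last s)
          (by simp only [Fin.val_last]; omega)
        omega
      have ha : (f 0 : ℕ) + (s + 1) ≤ m := by
        have h1 := (f (Fin.last s)).isLt
        have h2 := hj (Fin.last s)
        simp only [Fin.val_last] at h2
        omega
      have heq : A.submatrix f (fun j : Fin (s + 1) => (⟨b + (j : ℕ), by have := j.isLt; omega⟩ : Fin n))
          = contSub A (f 0 : ℕ) b s ha hb := by
        ext p q
        show A (f p) _ = A _ _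
        exact congrArg₂ A (Fin.ext (hj p)) (Fin.ext rfl)
      rw [heq]
      exact hcontig _ _ _ _
    · push_neg at hcase
      obtain ⟨t, hgap⟩ := exists_gap f hf hcase
      obtain ⟨g, hg, hcomp, hg0, hgL⟩ := insert_map f hf t hgap
      have hL1 : 1 ≤ L := by omega
      set cc : Fin (s + 1) → Fin n :=
        fun j : Fin (s + 1) => (⟨b + (j : ℕ), by have := j.isLt; omega⟩ : Fin n) with hcc_def
      have hccmono : StrictMono cc := by
        intro x y hxy
        rw [hcc_def]
        simp only [Fin.mk_lt_mk]
        rw [Fin.lt_def] at hxy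
        omega
      set N : Matrix (Fin (s + 2)) (Fin (s + 1)) ℝ := A.submatrix g cc with hN_def
      have hclaim := claimAux s N
        (by
          intro d hd
          have : N.submatrix d Fin.castSucc = A.submatrix (g ∘ d) (cc ∘ Fin.castSucc) :=
            Matrix.submatrix_submatrix ..
          rw [this]
          exact hsmall (g ∘ d) (cc ∘ Fin.castSucc) (hg.comp hd)
            (hccmono.comp Fin.strictMono_castSucc))
        (by
          have hEq : N.submatrix (Fin.succAbove 0) id = A.submatrix (g ∘ Fin.succ) cc := by
            rw [hN_def, Matrix.submatrix_submatrix, Fin.succAbove_zero, Function.comp_id]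
          rw [hEq]
          have hsp : ((g ∘ Fin.succ) (Fin.last s) : ℕ) - ((g ∘ Fin.succ) 0 : ℕ) ≤ L - 1 := by
            have e1 : (g ∘ Fin.succ) (Fin.last s) = f (Fin.last s) := by
              show g (Fin.succ (Fin.last s)) = _
              rw [Fin.succ_last]; exact hgL
            have e2 : (f 0 : ℕ) < ((g ∘ Fin.succ) 0 : ℕ) := by
              show (f 0 : ℕ) < (g (Fin.succ 0) : ℕ)
              rw [← hg0]
              exact hg (by simp only [Fin.lt_def, Fin.val_zero, Fin.val_succ]; omega)
            rw [e1]
            omega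
          exact ihL (L - 1) (by omega) (g ∘ Fin.succ) (hg.comp Fin.strictMono_succ) hsp b hb)
        (by
          have hEq : N.submatrix (Fin.succAbove (Fin.last (s + 1))) id
              = A.submatrix (g ∘ Fin.castSucc) cc := by
            rw [hN_def, Matrix.submatrix_submatrix, Fin.succAbove_last, Function.comp_id]
          rw [hEq]
          have hsp : ((g ∘ Fin.castSucc) (Fin.last s) : ℕ) - ((g ∘ Fin.castSucc) 0 : ℕ)
              ≤ L - 1 := by
            have e1 : ((g ∘ Fin.castSucc) (Fin.last s) : ℕ) < (f (Fin.last s) : ℕ) := by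
              show (g (Fin.castSucc (Fin.last s)) : ℕ) < _
              rw [← hgL]
              exact hg (Fin.castSucc_lt_last _)
            have e2 : (g ∘ Fin.castSucc) 0 = f 0 := by
              show g (Fin.castSucc 0) = f 0
              rw [Fin.castSucc_zero]; exact hg0
            rw [e2]
            omega
          exact ihL (L - 1) (by omega) (g ∘ Fin.castSucc) (hg.comp Fin.strictMono_castSucc)
            hsp b hb)
      have hfin := hclaim ⟨(t : ℕ) + 1, by have := t.isLt; omega⟩
      have hEq : N.submatrix (Fin.succAbove ⟨(t : ℕ) + 1, by have := t.isLt; omega⟩) id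
          = A.submatrix f cc := by
        rw [hN_def, Matrix.submatrix_submatrix, Function.comp_id, hcomp]
      rwa [hEq] at hfin

/-- Stage 2: all minors of order `s+1` are positive. -/
lemma stage2 {m n : ℕ} (A : Matrix (Fin m) (Fin n) ℝ) (s : ℕ)
    (hcontig : ∀ (a b : ℕ) (ha : a + (s + 1) ≤ m) (hb : b + (s + 1) ≤ n),
      0 < (contSub A a b s ha hb).det)
    (hsmall : ∀ (f' : Fin s → Fin m) (g' : Fin s → Fin n), StrictMono f' → StrictMono g' →
      0 < (A.submatrix f' g').det) :
    ∀ (L : ℕ) (f : Fin (s + 1) → Fin m) (g : Fin (s + 1) → Fin n),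
      StrictMono f → StrictMono g → (g (Fin.last s) : ℕ) - (g 0 : ℕ) ≤ L →
      0 < (A.submatrix f g).det := by
  intro L
  induction L using Nat.strong_induction_on with
  | _ L ihL =>
    intro f g hf hg hspan
    by_cases hcase : (g (Fin.last s) : ℕ) ≤ (g 0 : ℕ) + s
    · -- contiguous columns: use stage 1
      have hj : ∀ j : Fin (s + 1), (g j : ℕ) = (g 0 : ℕ) + (j : ℕ) := by
        intro j
        have h1 := strictMono_val_add_le g hg (j : ℕ) 0 j (by simp)
        have h2 := strictMono_val_add_le g hg (s - (j : ℕ)) j (Fin.last s)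
          (by simp only [Fin.val_last]; omega)
        omega
      have hbn : (g 0 : ℕ) + (s + 1) ≤ n := by
        have h1 := (g (Fin.last s)).isLt
        have h2 := hj (Fin.last s)
        simp only [Fin.val_last] at h2
        omega
      have heq : A.submatrix f g = A.submatrix f
          (fun j : Fin (s + 1) =>
            (⟨(g 0 : ℕ) + (j : ℕ), by have := j.isLt; omega⟩ : Fin n)) := by
        ext p q
        exact congrArg₂ A rfl (Fin.ext (hj q))
      rw [heq]
      exact stage1 A s hcontig hsmall ((f (Fin.last s) : ℕ) - (f 0 : ℕ)) f hf le_rfl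
        (g 0 : ℕ) hbn
    · push_neg at hcase
      obtain ⟨t, hgap⟩ := exists_gap g hg hcase
      obtain ⟨h', hh, hcomp, hh0, hhL⟩ := insert_map g hg t hgap
      have hL1 : 1 ≤ L := by omega
      set N : Matrix (Fin (s + 2)) (Fin (s + 1)) ℝ := (A.submatrix f h').transpose with hN_def
      have hclaim := claimAux s N
        (by
          intro d hd
          have heq : N.submatrix d Fin.castSucc
              = (A.submatrix (f ∘ Fin.castSucc) (h' ∘ d)).transpose := by
            ext p q
            rfl
          rw [heq, Matrix.det_transpose]
          exact hsmall (f ∘ Fin.castSucc) (h' ∘ d) (hf.comp Fin.strictMono_castSucc)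
            (hh.comp hd))
        (by
          have heq : N.submatrix (Fin.succAbove 0) id
              = (A.submatrix f (h' ∘ Fin.succ)).transpose := by
            rw [Fin.succAbove_zero]
            ext p q
            rfl
          rw [heq, Matrix.det_transpose]
          have hsp : ((h' ∘ Fin.succ) (Fin.last s) : ℕ) - ((h' ∘ Fin.succ) 0 : ℕ) ≤ L - 1 := by
            have e1 : (h' ∘ Fin.succ) (Fin.last s) = g (Fin.last s) := by
              show h' (Fin.succ (Fin.last s)) = _
              rw [Fin.succ_last]; exact hhL
            have e2 : (g 0 : ℕ) < ((h' ∘ Fin.succ) 0 : ℕ) := by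
              show (g 0 : ℕ) < (h' (Fin.succ 0) : ℕ)
              rw [← hh0]
              exact hh (by simp only [Fin.lt_def, Fin.val_zero, Fin.val_succ]; omega)
            rw [e1]
            omega
          exact ihL (L - 1) (by omega) f (h' ∘ Fin.succ) hf (hh.comp Fin.strictMono_succ) hsp)
        (by
          have heq : N.submatrix (Fin.succAbove (Fin.last (s + 1))) id
              = (A.submatrix f (h' ∘ Fin.castSucc)).transpose := by
            rw [Fin.succAbove_last]
            ext p q
            rfl
          rw [heq, Matrix.det_transpose]
          have hsp : ((h' ∘ Fin.castSucc) (Fin.last s) : ℕ) - ((h' ∘ Fin.castSucc) 0 : ℕ)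
              ≤ L - 1 := by
            have e1 : ((h' ∘ Fin.castSucc) (Fin.last s) : ℕ) < (g (Fin.last s) : ℕ) := by
              show (h' (Fin.castSucc (Fin.last s)) : ℕ) < _
              rw [← hhL]
              exact hh (Fin.castSucc_lt_last _)
            have e2 : (h' ∘ Fin.castSucc) 0 = g 0 := by
              show h' (Fin.castSucc 0) = g 0
              rw [Fin.castSucc_zero]; exact hh0
            rw [e2]
            omega
          exact ihL (L - 1) (by omega) f (h' ∘ Fin.castSucc) hf
            (hh.comp Fin.strictMono_castSucc) hsp)
      have hfin := hclaim ⟨(t : ℕ) + 1, by have := t.isLt; omega⟩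
      have hEq : N.submatrix (Fin.succAbove ⟨(t : ℕ) + 1, by have := t.isLt; omega⟩) id
          = (A.submatrix f g).transpose := by
        rw [hN_def]
        have : A.submatrix f (h' ∘ Fin.succAbove ⟨(t : ℕ) + 1, by have := t.isLt; omega⟩)
            = A.submatrix f g := by rw [hcomp]
        rw [← this]
        ext p q
        rfl
      rw [hEq, Matrix.det_transpose] at hfin
      exact hfin

/-- If every contiguous square submatrix `B` of `A` of size at most `k` has the sign
non-reversal property with respect to the single vector `x^B = (B¹¹, -B¹², …)`, then `A`
is totally positive of order `k`. -/
theorem stmt7 {m n k : ℕ} (hk : 1 ≤ k) (hm : k ≤ m) (hn : k ≤ n)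
    (A : Matrix (Fin m) (Fin n) ℝ)
    (h : ∀ s : ℕ, s + 1 ≤ k → ∀ (a b : ℕ) (ha : a + (s + 1) ≤ m) (hb : b + (s + 1) ≤ n),
      ∃ i : Fin (s + 1),
        0 < signAltMinorVec (contSub A a b s ha hb) i *
            (contSub A a b s ha hb).mulVec (signAltMinorVec (contSub A a b s ha hb)) i) :
    TotallyPositiveOfOrder A k := by
  classical
  -- Step A: all contiguous minors of order ≤ k are positive.
  have contig : ∀ s, s + 1 ≤ k → ∀ (a b : ℕ) (ha : a + (s + 1) ≤ m) (hb : b + (s + 1) ≤ n),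
      0 < (contSub A a b s ha hb).det := by
    intro s
    induction s using Nat.strong_induction_on with
    | _ s ihs =>
      intro hsk a b ha hb
      obtain ⟨i, hi⟩ := h s hsk a b ha hb
      rcases eq_or_ne i 0 with rfl | hne
      · rw [mulVec_signAltMinorVec, if_pos rfl] at hi
        have hx0 : 0 < signAltMinorVec (contSub A a b s ha hb) 0 := by
          have hval : signAltMinorVec (contSub A a b s ha hb) 0
              = ((contSub A a b s ha hb).submatrix Fin.succ Fin.succ).det := by
            rw [signAltMinorVec]
            rw [Fin.succAbove_zero]
            simp
          rw [hval]
          cases s with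
          | zero => simp
          | succ s' =>
            have hsub : (contSub A a b (s' + 1) ha hb).submatrix Fin.succ Fin.succ
                = contSub A (a + 1) (b + 1) s' (by omega) (by omega) := by
              ext p q
              show A _ _ = A _ _
              exact congrArg₂ A (Fin.ext (by simp only [Fin.val_succ]; omega))
                (Fin.ext (by simp only [Fin.val_succ]; omega))
            rw [hsub]
            exact ihs s' (by omega) (by omega) (a + 1) (b + 1) (by omega) (by omega)
        by_contra hcon
        push_neg at hcon
        nlinarith
      · exfalso
        rw [mulVec_signAltMinorVec, if_neg hne, mul_zero] at hi
        exact lt_irrefl 0 hi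
  -- Main induction on the order of the minor.
  intro r
  induction r using Nat.strong_induction_on with
  | _ r ihr =>
    intro hrk f g hf hg
    cases r with
    | zero => simp
    | succ s =>
      have hsmall : ∀ (f' : Fin s → Fin m) (g' : Fin s → Fin n), StrictMono f' →
          StrictMono g' → 0 < (A.submatrix f' g').det :=
        fun f' g' hf' hg' => ihr s (by omega) (by omega) f' g' hf' hg'
      exact stage2 A s (contig s hrk) hsmall ((g (Fin.last s) : ℕ) - (g 0 : ℕ)) f g hf hg
        le_rfl
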